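/- For every k ≥ 2 and every ε > 0, there exists m such that if α_1,…,α_m are chosen independently and uniformly from the set of pairs {(a,b) : 1 ≤ a < b ≤ k}, and given the schedule, independent fair coins D_1,…,D_m define τ_i as the transposition α_i when D_i is heads and the identity otherwise, then with probability greater than 1 − ε over the schedule, the conditional total variation distance between the law of τ_m∘⋯∘τ_1 and the uniform distribution on S_k is less than ε. -/

import Mathlib

/-- The random-walk product `τ = τ_m ∘ ⋯ ∘ τ_1`, where `τ_i` is the
transposition `α i` if the coin `D i` is heads and the identity otherwise. -/
def walkProd {k m : ℕ} (α : Fin m → Fin k × Fin k) (D : Fin m → Bool) :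
    Equiv.Perm (Fin k) :=
  (((List.finRange m).reverse.map
    (fun i => if D i then Equiv.swap (α i).1 (α i).2 else 1)).prod)

/-- The conditional total variation distance to uniform on `S_k` of the
product of `m` coin-flipped transpositions with prescribed pairs `α`. -/
noncomputable def schedTV {k m : ℕ}
    (α : Fin m → {p : Fin k × Fin k // p.1 < p.2}) : ℝ :=
  (1 / 2 : ℝ) * ∑ σ : Equiv.Perm (Fin k),
    |(((Finset.univ : Finset (Fin m → Bool)).filter
        (fun D => walkProd (fun i => (α i).val) D = σ)).card : ℝ) / 2 ^ m
      - 1 / (Nat.factorial k)|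

namespace Stmt15Aux

abbrev Pair (k : ℕ) := {p : Fin k × Fin k // p.1 < p.2}

variable {k : ℕ}

def sw (p : Pair k) : Equiv.Perm (Fin k) := Equiv.swap p.val.1 p.val.2

noncomputable def P {m : ℕ} (α : Fin m → Pair k) (σ : Equiv.Perm (Fin k)) : ℝ :=
  (∑ D : Fin m → Bool, if walkProd (fun i => (α i).val) D = σ then 1 else 0) / 2 ^ m

noncomputable def qf {m : ℕ} (α : Fin m → Pair k) (σ : Equiv.Perm (Fin k)) : ℝ :=
  P α σ - 1 / (Nat.factorial k)

noncomputable def F (k m : ℕ) : ℝ :=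
  ∑ α : Fin m → Pair k, ∑ σ : Equiv.Perm (Fin k), (qf α σ)^2

noncomputable def Phi (k : ℕ) (q : Equiv.Perm (Fin k) → ℝ) : ℝ :=
  ∑ p : Pair k, ∑ σ : Equiv.Perm (Fin k), ((q σ + q (σ * sw p))/2)^2

theorem walkProd_succ {k m : ℕ} (α : Fin (m+1) → Fin k × Fin k) (D : Fin (m+1) → Bool) :
    walkProd α D = walkProd (α ∘ Fin.succ) (D ∘ Fin.succ) *
      (if D 0 then Equiv.swap (α 0).1 (α 0).2 else 1) := by
  unfold walkProd
  rw [List.finRange_succ, List.reverse_cons, List.map_append, List.prod_append,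
    List.map_reverse, List.map_reverse, List.map_map]
  simp [Function.comp_def]


theorem P_zero (α : Fin 0 → Pair k) (σ : Equiv.Perm (Fin k)) :
    P α σ = if σ = 1 then 1 else 0 := by
  rw [P]
  have : ∀ D : Fin 0 → Bool, walkProd (fun i => (α i).val) D = 1 := by
    intro D; simp [walkProd]
  simp [this, eq_comm]

theorem P_succ {m : ℕ} (p : Pair k) (α : Fin m → Pair k) (σ : Equiv.Perm (Fin k)) :
    P (Fin.cons p α) σ = (P α σ + P α (σ * sw p)) / 2 := by
  rw [P, ← Equiv.sum_comp (Fin.consEquiv fun _ : Fin (m+1) => Bool)]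
  rw [Fintype.sum_prod_type]
  have key : ∀ (b : Bool) (D : Fin m → Bool),
      walkProd (fun i => ((Fin.cons p α : Fin (m+1) → Pair k) i).val)
        ((Fin.consEquiv fun _ => Bool) (b, D))
      = walkProd (fun i => (α i).val) D * (if b then sw p else 1) := by
    intro b D
    rw [walkProd_succ]
    have e1 : ((fun i => ((Fin.cons p α : Fin (m+1) → Pair k) i).val) ∘ Fin.succ)
        = fun i => (α i).val := by funext i; simp
    have e2 : (((Fin.consEquiv fun _ : Fin (m+1) => Bool) (b, D)) ∘ Fin.succ) = D := by
      funext i; simp [Fin.consEquiv]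
    rw [e1, e2]
    simp [Fin.consEquiv, sw]
  simp only [key]
  rw [Fintype.sum_bool]
  have h2 : ∀ D : Fin m → Bool,
      ((walkProd (fun i => (α i).val) D * sw p = σ)
        ↔ (walkProd (fun i => (α i).val) D = σ * sw p)) := by
    intro D
    constructor
    · intro h; rw [← h, mul_assoc]
      simp [sw, Equiv.swap_mul_self]
    · intro h; rw [h, mul_assoc]
      simp [sw, Equiv.swap_mul_self]
  simp only [h2, if_true, Bool.false_eq_true, if_false, mul_one]
  rw [P, P]
  ring

theorem sum_P {m : ℕ} (α : Fin m → Pair k) : ∑ σ : Equiv.Perm (Fin k), P α σ = 1 := by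
  simp only [P]
  rw [← Finset.sum_div, Finset.sum_comm]
  have : ∀ D : Fin m → Bool,
      (∑ σ : Equiv.Perm (Fin k), if walkProd (fun i => (α i).val) D = σ then (1:ℝ) else 0) = 1 := by
    intro D
    rw [Finset.sum_ite_eq]
    simp
  simp only [this]
  rw [Finset.sum_const, Finset.card_univ]
  simp

theorem sum_reindex (q : Equiv.Perm (Fin k) → ℝ) (τ : Equiv.Perm (Fin k)) :
    ∑ σ : Equiv.Perm (Fin k), q (σ * τ) = ∑ σ : Equiv.Perm (Fin k), q σ :=
  Equiv.sum_comp (Equiv.mulRight τ) q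

theorem Phi_nonneg (q : Equiv.Perm (Fin k) → ℝ) : 0 ≤ Phi k q :=
  Finset.sum_nonneg fun _ _ => Finset.sum_nonneg fun _ _ => sq_nonneg _

theorem Phi_smul (c : ℝ) (q : Equiv.Perm (Fin k) → ℝ) :
    Phi k (fun σ => c * q σ) = c^2 * Phi k q := by
  unfold Phi
  rw [Finset.mul_sum]
  refine Finset.sum_congr rfl fun p _ => ?_
  rw [Finset.mul_sum]
  exact Finset.sum_congr rfl fun σ _ => by ring

theorem term_eq (q : Equiv.Perm (Fin k) → ℝ) (hq1 : ∑ σ, q σ ^ 2 = 1) (p : Pair k) :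
    ∑ σ : Equiv.Perm (Fin k), ((q σ + q (σ * sw p))/2)^2
      = (1 + ∑ σ : Equiv.Perm (Fin k), q σ * q (σ * sw p)) / 2 := by
  have h1 : ∑ σ : Equiv.Perm (Fin k), q (σ * sw p) ^ 2 = 1 := by
    rw [sum_reindex (fun σ => q σ ^ 2) (sw p)]; exact hq1
  have : ∀ σ : Equiv.Perm (Fin k), ((q σ + q (σ * sw p))/2)^2
      = (q σ ^2)/4 + (q (σ * sw p) ^2)/4 + (q σ * q (σ * sw p))/2 := fun σ => by ring
  rw [Finset.sum_congr rfl fun σ _ => this σ, Finset.sum_add_distrib, Finset.sum_add_distrib,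
    ← Finset.sum_div, ← Finset.sum_div, ← Finset.sum_div, hq1, h1]
  ring

theorem diff_eq (q : Equiv.Perm (Fin k) → ℝ) (hq1 : ∑ σ, q σ ^ 2 = 1) (p : Pair k) :
    ∑ σ : Equiv.Perm (Fin k), (q σ - q (σ * sw p))^2
      = 2 - 2 * ∑ σ : Equiv.Perm (Fin k), q σ * q (σ * sw p) := by
  have h1 : ∑ σ : Equiv.Perm (Fin k), q (σ * sw p) ^ 2 = 1 := by
    rw [sum_reindex (fun σ => q σ ^ 2) (sw p)]; exact hq1
  have : ∀ σ : Equiv.Perm (Fin k), (q σ - q (σ * sw p))^2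
      = (q σ ^2) + (q (σ * sw p) ^2) - 2 * (q σ * q (σ * sw p)) := fun σ => by ring
  rw [Finset.sum_congr rfl fun σ _ => this σ, Finset.sum_sub_distrib, Finset.sum_add_distrib,
    hq1, h1, ← Finset.mul_sum]
  ring

theorem term_le (q : Equiv.Perm (Fin k) → ℝ) (hq1 : ∑ σ, q σ ^ 2 = 1) (p : Pair k) :
    ∑ σ : Equiv.Perm (Fin k), q σ * q (σ * sw p) ≤ 1 := by
  have h0 : 0 ≤ ∑ σ : Equiv.Perm (Fin k), (q σ - q (σ * sw p))^2 :=
    Finset.sum_nonneg fun _ _ => sq_nonneg _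
  rw [diff_eq q hq1 p] at h0
  linarith

theorem Phi_lt (q : Equiv.Perm (Fin k) → ℝ)
    (hq0 : ∑ σ, q σ = 0) (hq1 : ∑ σ, q σ ^ 2 = 1) :
    Phi k q < (Fintype.card (Pair k) : ℝ) := by
  by_cases hall : ∀ p : Pair k, ∑ σ : Equiv.Perm (Fin k), q σ * q (σ * sw p) = 1
  · -- derive contradiction: q invariant, hence constant, hence 0
    exfalso
    have hinv : ∀ (p : Pair k) (σ : Equiv.Perm (Fin k)), q (σ * sw p) = q σ := by
      intro p σ
      have h0 : ∑ τ : Equiv.Perm (Fin k), (q τ - q (τ * sw p))^2 = 0 := by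
        rw [diff_eq q hq1 p, hall p]; ring
      have := (Finset.sum_eq_zero_iff_of_nonneg
        (fun τ _ => sq_nonneg (q τ - q (τ * sw p)))).1 h0 σ (Finset.mem_univ σ)
      have := pow_eq_zero_iff (n := 2) (by norm_num) |>.1 this
      linarith [this]
    -- subgroup of invariance
    set H : Subgroup (Equiv.Perm (Fin k)) :=
      { carrier := {g | ∀ σ, q (σ * g) = q σ}
        one_mem' := by intro σ; simp
        mul_mem' := by
          intro a b ha hb σ
          rw [← mul_assoc, hb, ha]
        inv_mem' := by
          intro a ha σ
          have := ha (σ * a⁻¹)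
          rw [mul_assoc] at this
          simp at this
          rw [← this] } with hH
    have hswaps : {g : Equiv.Perm (Fin k) | g.IsSwap} ⊆ (H : Set (Equiv.Perm (Fin k))) := by
      rintro g ⟨a, b, hab, rfl⟩
      rcases lt_or_gt_of_ne hab with h | h
      · exact fun σ => hinv ⟨(a, b), h⟩ σ
      · intro σ
        rw [Equiv.swap_comm]
        exact hinv ⟨(b, a), h⟩ σ
    have htop : ∀ g : Equiv.Perm (Fin k), g ∈ H := by
      intro g
      have : (Subgroup.closure {g : Equiv.Perm (Fin k) | g.IsSwap}) ≤ H :=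
        (Subgroup.closure_le H).2 hswaps
      rw [Equiv.Perm.closure_isSwap] at this
      exact this (Subgroup.mem_top g)
    have hconst : ∀ g : Equiv.Perm (Fin k), q g = q 1 := by
      intro g
      have := htop g 1
      simpa using this
    have hsum : ∑ σ : Equiv.Perm (Fin k), q σ
        = (Fintype.card (Equiv.Perm (Fin k)) : ℝ) * q 1 := by
      rw [Finset.sum_congr rfl fun σ _ => hconst σ, Finset.sum_const, Finset.card_univ,
        nsmul_eq_mul]
    have hcard : (0:ℝ) < (Fintype.card (Equiv.Perm (Fin k)) : ℝ) := by
      exact_mod_cast Fintype.card_pos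
    have hq1' : q 1 = 0 := by
      rw [hq0] at hsum
      have := hsum.symm
      rcases mul_eq_zero.1 this with h | h
      · exact absurd h (ne_of_gt hcard)
      · exact h
    have : ∑ σ : Equiv.Perm (Fin k), q σ ^ 2 = 0 := by
      refine Finset.sum_eq_zero fun σ _ => ?_
      rw [hconst σ, hq1']; ring
    rw [hq1] at this; norm_num at this
  · push_neg at hall
    obtain ⟨p0, hp0⟩ := hall
    have hp0' : ∑ σ : Equiv.Perm (Fin k), q σ * q (σ * sw p0) < 1 :=
      lt_of_le_of_ne (term_le q hq1 p0) hp0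
    unfold Phi
    rw [Finset.sum_congr rfl fun p _ => term_eq q hq1 p]
    have : (Fintype.card (Pair k) : ℝ) = ∑ _p : Pair k, (1:ℝ) := by
      rw [Finset.sum_const, Finset.card_univ, nsmul_eq_mul, mul_one]
    rw [this]
    refine Finset.sum_lt_sum (fun p _ => ?_) ⟨p0, Finset.mem_univ p0, ?_⟩
    · have := term_le q hq1 p
      linarith
    · linarith

theorem sphere_nonempty (hk : 2 ≤ k) :
    ∃ q : Equiv.Perm (Fin k) → ℝ, (∑ σ, q σ = 0) ∧ (∑ σ, q σ ^ 2 = 1) := by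
  have h0 : (0:ℕ) < k := by omega
  have h1 : (1:ℕ) < k := by omega
  set a : Equiv.Perm (Fin k) := 1 with ha
  set b : Equiv.Perm (Fin k) := Equiv.swap ⟨0, h0⟩ ⟨1, h1⟩ with hb
  have hne : (⟨0, h0⟩ : Fin k) ≠ ⟨1, h1⟩ := by simp
  have hab : a ≠ b := by
    rw [ha, hb]
    intro h
    exact hne ((Equiv.swap_eq_one_iff).1 h.symm)
  refine ⟨fun σ => (Real.sqrt 2)⁻¹ * ((if σ = a then 1 else 0) - (if σ = b then 1 else 0)),
    ?_, ?_⟩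
  · rw [← Finset.mul_sum, Finset.sum_sub_distrib]
    rw [Finset.sum_ite_eq' Finset.univ a (fun _ => (1:ℝ)),
      Finset.sum_ite_eq' Finset.univ b (fun _ => (1:ℝ))]
    simp
  · have hsq : ∀ σ : Equiv.Perm (Fin k),
        (((Real.sqrt 2)⁻¹ * ((if σ = a then 1 else 0) - (if σ = b then 1 else 0))))^2
        = ((Real.sqrt 2)⁻¹)^2 * ((if σ = a then 1 else 0) + (if σ = b then 1 else 0)) := by
      intro σ
      by_cases h1 : σ = a <;> by_cases h2 : σ = b
      · exact absurd (h1 ▸ h2) hab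
      all_goals simp [h1, h2, hab, Ne.symm hab]; try ring
    rw [Finset.sum_congr rfl fun σ _ => hsq σ, ← Finset.mul_sum, Finset.sum_add_distrib,
      Finset.sum_ite_eq' Finset.univ a (fun _ => (1:ℝ)),
      Finset.sum_ite_eq' Finset.univ b (fun _ => (1:ℝ))]
    have h2 : ((Real.sqrt 2)⁻¹ : ℝ)^2 = 2⁻¹ := by
      rw [inv_pow, Real.sq_sqrt (by norm_num : (0:ℝ) ≤ 2)]
    simp [h2]
    norm_num

theorem exists_mu (hk : 2 ≤ k) : ∃ μ : ℝ, 0 ≤ μ ∧ μ < (Fintype.card (Pair k) : ℝ) ∧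
    ∀ q : Equiv.Perm (Fin k) → ℝ, (∑ σ, q σ = 0) → Phi k q ≤ μ * ∑ σ, q σ ^ 2 := by
  set S : Set (Equiv.Perm (Fin k) → ℝ) :=
    {q | (∑ σ, q σ = 0) ∧ (∑ σ, q σ ^ 2 = 1)} with hSdef
  have hclosed : IsClosed S := by
    have h1 : IsClosed {q : Equiv.Perm (Fin k) → ℝ | ∑ σ, q σ = 0} :=
      isClosed_eq (continuous_finset_sum _ fun σ _ => continuous_apply σ) continuous_const
    have h2 : IsClosed {q : Equiv.Perm (Fin k) → ℝ | ∑ σ, q σ ^ 2 = 1} :=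
      isClosed_eq (continuous_finset_sum _ fun σ _ => (continuous_apply σ).pow 2)
        continuous_const
    exact h1.inter h2
  have hbdd : Bornology.IsBounded S := by
    refine (Metric.isBounded_closedBall (x := (0 : Equiv.Perm (Fin k) → ℝ)) (r := 1)).subset ?_
    intro q hq
    rw [Metric.mem_closedBall, dist_pi_le_iff zero_le_one]
    intro σ
    rw [Pi.zero_apply, Real.dist_eq, sub_zero]
    have hle : q σ ^ 2 ≤ 1 := by
      rw [← hq.2]
      exact Finset.single_le_sum (fun τ _ => sq_nonneg (q τ)) (Finset.mem_univ σ)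
    exact (sq_le_one_iff_abs_le_one (q σ)).1 hle
  have hcompact : IsCompact S := Metric.isCompact_of_isClosed_isBounded hclosed hbdd
  have hcont : Continuous (Phi k) := by
    unfold Phi
    refine continuous_finset_sum _ fun p _ => continuous_finset_sum _ fun σ _ => ?_
    exact (((continuous_apply σ).add (continuous_apply (σ * sw p))).div_const 2).pow 2
  obtain ⟨q0, hq00, hq01⟩ := sphere_nonempty hk
  obtain ⟨qs, hqsS, hmax⟩ := hcompact.exists_isMaxOn ⟨q0, hq00, hq01⟩ hcont.continuousOn
  refine ⟨Phi k qs, Phi_nonneg qs, Phi_lt qs hqsS.1 hqsS.2, ?_⟩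
  intro q hq0
  by_cases ht : ∑ σ, q σ ^ 2 = 0
  · have hz : ∀ σ, q σ = 0 := by
      intro σ
      have := (Finset.sum_eq_zero_iff_of_nonneg (fun τ _ => sq_nonneg (q τ))).1 ht σ
        (Finset.mem_univ σ)
      exact pow_eq_zero_iff (by norm_num : (2:ℕ) ≠ 0) |>.1 this
    have : Phi k q = 0 := by
      unfold Phi
      refine Finset.sum_eq_zero fun p _ => Finset.sum_eq_zero fun σ _ => ?_
      rw [hz σ, hz (σ * sw p)]; norm_num
    rw [this, ht, mul_zero]
  · have htpos : 0 < ∑ σ, q σ ^ 2 :=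
      lt_of_le_of_ne (Finset.sum_nonneg fun τ _ => sq_nonneg (q τ)) (Ne.symm ht)
    set t := ∑ σ, q σ ^ 2 with htdef
    set c : ℝ := (Real.sqrt t)⁻¹ with hcdef
    have hc2 : c^2 = t⁻¹ := by
      rw [hcdef, inv_pow, Real.sq_sqrt htpos.le]
    have hmem : (fun σ => c * q σ) ∈ S := by
      constructor
      · rw [← Finset.mul_sum, hq0, mul_zero]
      · have : ∀ σ : Equiv.Perm (Fin k), (c * q σ)^2 = c^2 * q σ ^2 := fun σ => by ring
        rw [Finset.sum_congr rfl fun σ _ => this σ, ← Finset.mul_sum, hc2, ← htdef,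
          inv_mul_cancel₀ (ne_of_gt htpos)]
    have hle := hmax hmem
    rw [Set.mem_setOf_eq] at hle
    have hPhi : Phi k (fun σ => c * q σ) = t⁻¹ * Phi k q := by
      rw [Phi_smul, hc2]
    rw [hPhi] at hle
    calc Phi k q = t * (t⁻¹ * Phi k q) := by
          field_simp
      _ ≤ t * Phi k qs := by
          exact mul_le_mul_of_nonneg_left hle htpos.le
      _ = Phi k qs * t := mul_comm _ _

theorem card_perm : (Fintype.card (Equiv.Perm (Fin k)) : ℝ) = (Nat.factorial k : ℝ) := by
  rw [Fintype.card_perm, Fintype.card_fin]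

/-- schedTV in terms of qf -/
theorem schedTV_eq {m : ℕ} (α : Fin m → Pair k) :
    schedTV α = (1/2 : ℝ) * ∑ σ : Equiv.Perm (Fin k), |qf α σ| := by
  unfold schedTV qf P
  congr 1
  refine Finset.sum_congr rfl fun σ _ => ?_
  congr 2
  rw [Finset.natCast_card_filter]

theorem qf_sq_bound {m : ℕ} (α : Fin m → Pair k) (ε : ℝ) (hε : 0 < ε)
    (h : ∑ σ : Equiv.Perm (Fin k), (qf α σ)^2 < ε^2 * 4 / (Nat.factorial k : ℝ)) :
    schedTV α < ε := by
  have hfac : (0:ℝ) < (Nat.factorial k : ℝ) := by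
    exact_mod_cast Nat.factorial_pos k
  rw [schedTV_eq]
  have hCS : (∑ σ : Equiv.Perm (Fin k), |qf α σ|)^2
      ≤ (∑ σ : Equiv.Perm (Fin k), (qf α σ)^2) * (Nat.factorial k : ℝ) := by
    have := Finset.sum_mul_sq_le_sq_mul_sq Finset.univ
      (fun σ : Equiv.Perm (Fin k) => |qf α σ|) (fun _ => (1:ℝ))
    simp only [mul_one, one_pow] at this
    rw [Finset.sum_const, Finset.card_univ, nsmul_eq_mul, mul_one] at this
    calc (∑ σ : Equiv.Perm (Fin k), |qf α σ|)^2
        ≤ (∑ σ : Equiv.Perm (Fin k), |qf α σ|^2) * (Fintype.card (Equiv.Perm (Fin k)) : ℝ) := by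
          exact this
      _ = (∑ σ : Equiv.Perm (Fin k), (qf α σ)^2) * (Nat.factorial k : ℝ) := by
          rw [card_perm]
          congr 1
          exact Finset.sum_congr rfl fun σ _ => sq_abs _
  have h2 : (∑ σ : Equiv.Perm (Fin k), |qf α σ|)^2 < (2*ε)^2 := by
    calc (∑ σ : Equiv.Perm (Fin k), |qf α σ|)^2
        ≤ (∑ σ : Equiv.Perm (Fin k), (qf α σ)^2) * (Nat.factorial k : ℝ) := hCS
      _ < (ε^2 * 4 / (Nat.factorial k : ℝ)) * (Nat.factorial k : ℝ) := by
          exact mul_lt_mul_of_pos_right h hfac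
      _ = (2*ε)^2 := by field_simp; ring
  have hnn : 0 ≤ ∑ σ : Equiv.Perm (Fin k), |qf α σ| :=
    Finset.sum_nonneg fun σ _ => abs_nonneg _
  have h3 : ∑ σ : Equiv.Perm (Fin k), |qf α σ| < 2*ε := by
    by_contra hc
    push_neg at hc
    exact absurd h2 (not_lt.2 (pow_le_pow_left₀ (by linarith) hc 2))
  linarith

theorem qf_succ {m : ℕ} (p : Pair k) (α : Fin m → Pair k) (σ : Equiv.Perm (Fin k)) :
    qf (Fin.cons p α) σ = (qf α σ + qf α (σ * sw p)) / 2 := by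
  unfold qf
  rw [P_succ]
  ring

theorem sum_qf {m : ℕ} (α : Fin m → Pair k) : ∑ σ : Equiv.Perm (Fin k), qf α σ = 0 := by
  unfold qf
  rw [Finset.sum_sub_distrib, sum_P, Finset.sum_const, Finset.card_univ, nsmul_eq_mul]
  rw [Fintype.card_perm, Fintype.card_fin]
  have : (Nat.factorial k : ℝ) ≠ 0 := by exact_mod_cast (Nat.factorial_pos k).ne'
  field_simp
  norm_num

theorem F_zero : F k 0 ≤ 2 := by
  have hfac : (0:ℝ) < (Nat.factorial k : ℝ) := by exact_mod_cast Nat.factorial_pos k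
  set u : ℝ := 1 / (Nat.factorial k : ℝ) with hu
  have hu0 : 0 ≤ u := by positivity
  have hu1 : u ≤ 1 := by
    rw [hu, div_le_one hfac]
    exact_mod_cast Nat.one_le_iff_ne_zero.2 (Nat.factorial_pos k).ne'
  have hbound : ∀ (α : Fin 0 → Pair k), ∑ σ : Equiv.Perm (Fin k), (qf α σ)^2 ≤ 2 := by
    intro α
    have h1 : ∀ σ : Equiv.Perm (Fin k), (qf α σ)^2 ≤ (if σ = 1 then (1:ℝ) else 0) + u^2 := by
      intro σ
      rw [qf, P_zero, ← hu]
      by_cases h : σ = 1 <;> simp [h] <;> nlinarith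
    have hsum : ∑ σ : Equiv.Perm (Fin k), ((if σ = 1 then (1:ℝ) else 0) + u^2)
        = 1 + (Fintype.card (Equiv.Perm (Fin k)) : ℝ) * u^2 := by
      rw [Finset.sum_add_distrib, Finset.sum_ite_eq' Finset.univ (1 : Equiv.Perm (Fin k))
        (fun _ => (1:ℝ)), Finset.sum_const, Finset.card_univ, nsmul_eq_mul]
      simp
    have hfin : (Fintype.card (Equiv.Perm (Fin k)) : ℝ) * u^2 ≤ 1 := by
      rw [Fintype.card_perm, Fintype.card_fin, hu]
      rw [div_pow, one_pow]
      rw [mul_one_div]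
      rw [div_le_one (by positivity)]
      have h1f : (1:ℝ) ≤ (Nat.factorial k : ℝ) := by
        exact_mod_cast Nat.one_le_iff_ne_zero.2 (Nat.factorial_pos k).ne'
      nlinarith [h1f]
    calc ∑ σ : Equiv.Perm (Fin k), (qf α σ)^2
        ≤ ∑ σ : Equiv.Perm (Fin k), ((if σ = 1 then (1:ℝ) else 0) + u^2) :=
          Finset.sum_le_sum fun σ _ => h1 σ
      _ = 1 + (Fintype.card (Equiv.Perm (Fin k)) : ℝ) * u^2 := hsum
      _ ≤ 2 := by linarith
  unfold F
  calc ∑ α : Fin 0 → Pair k, ∑ σ : Equiv.Perm (Fin k), (qf α σ)^2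
      ≤ ∑ _α : Fin 0 → Pair k, (2:ℝ) := Finset.sum_le_sum fun α _ => hbound α
    _ = 2 := by
        rw [Finset.sum_const, Finset.card_univ, nsmul_eq_mul]
        have : Fintype.card (Fin 0 → Pair k) = 1 := by simp
        rw [this]; norm_num

theorem F_succ (m : ℕ) (μ : ℝ)
    (hμ : ∀ q : Equiv.Perm (Fin k) → ℝ, (∑ σ, q σ = 0) → Phi k q ≤ μ * ∑ σ, q σ ^ 2) :
    F k (m+1) ≤ μ * F k m := by
  unfold F
  rw [← Equiv.sum_comp (Fin.consEquiv fun _ : Fin (m+1) => Pair k)]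
  rw [Fintype.sum_prod_type, Finset.sum_comm]
  have hterm : ∀ (α : Fin m → Pair k) (p : Pair k),
      ∑ σ : Equiv.Perm (Fin k),
        (qf ((Fin.consEquiv fun _ : Fin (m+1) => Pair k) (p, α)) σ)^2
      = ∑ σ : Equiv.Perm (Fin k), ((qf α σ + qf α (σ * sw p))/2)^2 := by
    intro α p
    refine Finset.sum_congr rfl fun σ _ => ?_
    have : ((Fin.consEquiv fun _ : Fin (m+1) => Pair k) (p, α)) = Fin.cons p α := rfl
    rw [this, qf_succ]
  calc ∑ α : Fin m → Pair k, ∑ p : Pair k, ∑ σ : Equiv.Perm (Fin k),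
        (qf ((Fin.consEquiv fun _ : Fin (m+1) => Pair k) (p, α)) σ)^2
      = ∑ α : Fin m → Pair k, Phi k (qf α) := by
        refine Finset.sum_congr rfl fun α _ => ?_
        rw [Phi]
        exact Finset.sum_congr rfl fun p _ => hterm α p
    _ ≤ ∑ α : Fin m → Pair k, μ * ∑ σ : Equiv.Perm (Fin k), (qf α σ)^2 :=
        Finset.sum_le_sum fun α _ => hμ (qf α) (sum_qf α)
    _ = μ * ∑ α : Fin m → Pair k, ∑ σ : Equiv.Perm (Fin k), (qf α σ)^2 := by
        rw [Finset.mul_sum]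

theorem F_le (m : ℕ) (μ : ℝ) (hμ0 : 0 ≤ μ)
    (hμ : ∀ q : Equiv.Perm (Fin k) → ℝ, (∑ σ, q σ = 0) → Phi k q ≤ μ * ∑ σ, q σ ^ 2) :
    F k m ≤ 2 * μ ^ m := by
  induction m with
  | zero => simpa using F_zero
  | succ n ih =>
    calc F k (n+1) ≤ μ * F k n := F_succ n μ hμ
      _ ≤ μ * (2 * μ ^ n) := mul_le_mul_of_nonneg_left ih hμ0
      _ = 2 * μ ^ (n+1) := by ring

end Stmt15Aux

open Stmt15Aux in
theorem stmt15 (k : ℕ) (hk : 2 ≤ k) (ε : ℝ) (hε : 0 < ε) :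
    ∃ m : ℕ,
      (1 - ε) * (Fintype.card (Fin m → {p : Fin k × Fin k // p.1 < p.2}) : ℝ)
        < (Nat.card {α : Fin m → {p : Fin k × Fin k // p.1 < p.2} //
            schedTV α < ε} : ℝ) := by
  classical
  have hfac : (0:ℝ) < (Nat.factorial k : ℝ) := by exact_mod_cast Nat.factorial_pos k
  have h0k : 0 < k := by omega
  have h1k : 1 < k := by omega
  have hNpos : 0 < Fintype.card (Pair k) :=
    Fintype.card_pos_iff.2 ⟨⟨(⟨0, h0k⟩, ⟨1, h1k⟩), by exact Fin.mk_lt_mk.2 (by norm_num)⟩⟩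
  set N : ℝ := (Fintype.card (Pair k) : ℝ) with hNdef
  have hN : (0:ℝ) < N := by rw [hNdef]; exact_mod_cast hNpos
  obtain ⟨μ, hμ0, hμN, hμ⟩ := exists_mu hk
  set lam : ℝ := μ / N with hlamdef
  have hlam0 : 0 ≤ lam := div_nonneg hμ0 hN.le
  have hlam1 : lam < 1 := (div_lt_one hN).2 hμN
  set c : ℝ := ε^2 * 4 / (Nat.factorial k : ℝ) with hcdef
  have hc : 0 < c := by positivity
  obtain ⟨m, hm⟩ := exists_pow_lt_of_lt_one (show (0:ℝ) < ε * c / 2 by positivity) hlam1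
  refine ⟨m, ?_⟩
  have hNm : (0:ℝ) < N ^ m := pow_pos hN m
  have hμm : 2 * μ ^ m < ε * c * N ^ m := by
    have hmu_eq : μ ^ m = lam ^ m * N ^ m := by
      rw [hlamdef, div_pow, div_mul_cancel₀ _ (ne_of_gt hNm)]
    have h1 : lam ^ m * N ^ m < (ε * c / 2) * N ^ m :=
      mul_lt_mul_of_pos_right hm hNm
    rw [hmu_eq]
    nlinarith [h1]
  set Bad : Finset (Fin m → Pair k) :=
    Finset.univ.filter (fun α => ¬ (∑ σ : Equiv.Perm (Fin k), (qf α σ)^2 < c)) with hBadDef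
  have hBadF : (Bad.card : ℝ) * c ≤ F k m := by
    have h1 : ∀ α ∈ Bad, c ≤ ∑ σ : Equiv.Perm (Fin k), (qf α σ)^2 := by
      intro α hα
      exact not_lt.1 (Finset.mem_filter.1 hα).2
    have h2 := Finset.card_nsmul_le_sum Bad
      (fun α => ∑ σ : Equiv.Perm (Fin k), (qf α σ)^2) c h1
    rw [nsmul_eq_mul] at h2
    refine h2.trans ?_
    unfold F
    exact Finset.sum_le_sum_of_subset_of_nonneg (Finset.filter_subset _ _)
      fun α _ _ => Finset.sum_nonneg fun σ _ => sq_nonneg _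
  have hFm : F k m ≤ 2 * μ ^ m := F_le m μ hμ0 hμ
  have hBadlt : (Bad.card : ℝ) < ε * N ^ m := by
    have h3 : (Bad.card : ℝ) * c < (ε * N ^ m) * c := by nlinarith [hBadF, hFm, hμm]
    exact lt_of_mul_lt_mul_right h3 hc.le
  set Good : Finset (Fin m → Pair k) :=
    Finset.univ.filter (fun α => schedTV α < ε) with hGoodDef
  have hsub : Badᶜ ⊆ Good := by
    intro α hα
    rw [Finset.mem_compl] at hα
    have hlt : ∑ σ : Equiv.Perm (Fin k), (qf α σ)^2 < c := by
      by_contra hcon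
      exact hα (Finset.mem_filter.2 ⟨Finset.mem_univ α, hcon⟩)
    exact Finset.mem_filter.2 ⟨Finset.mem_univ α, qf_sq_bound α ε hε (hcdef ▸ hlt)⟩
  have hcardBadle : Bad.card ≤ Fintype.card (Fin m → Pair k) := Finset.card_le_univ Bad
  have hcardGood : (Fintype.card (Fin m → Pair k) : ℝ) - (Bad.card : ℝ) ≤ (Good.card : ℝ) := by
    have h4 := Finset.card_le_card hsub
    rw [Finset.card_compl] at h4
    have := Nat.cast_le (α := ℝ) |>.2 h4
    rw [Nat.cast_sub hcardBadle] at this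
    exact this
  have hcardfun : (Fintype.card (Fin m → Pair k) : ℝ) = N ^ m := by
    rw [Fintype.card_fun, Fintype.card_fin, hNdef]
    push_cast
    ring
  have hNatcard : (Nat.card {α : Fin m → Pair k // schedTV α < ε} : ℝ) = (Good.card : ℝ) := by
    rw [Nat.card_eq_fintype_card, Fintype.card_subtype]
  rw [hNatcard, hcardfun]
  have : (N ^ m : ℝ) - (Bad.card : ℝ) > (1 - ε) * N ^ m := by nlinarith [hBadlt]
  calc (1 - ε) * N ^ m < N ^ m - (Bad.card : ℝ) := this
    _ ≤ (Good.card : ℝ) := by rw [← hcardfun] at *; linarith [hcardGood]
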